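/- For an integer ℓ, there exists an acute lattice triangle with lattice perimeter ℓ whose centroid is a lattice point, if and only if ℓ ≥ 3 and ℓ ∉ {5, 11}. -/

import Mathlib

/-- Lattice length of the segment joining two lattice points. -/
def llen (P Q : ℤ × ℤ) : ℕ := Int.gcd (P.1 - Q.1) (P.2 - Q.2)

/-- Integer dot product on `ℤ × ℤ`. -/
def dotv (u v : ℤ × ℤ) : ℤ := u.1 * v.1 + u.2 * v.2

/-- The three vertices are not collinear (a genuine triangle). -/
def Noncollinear (V₀ V₁ V₂ : ℤ × ℤ) : Prop :=
  (V₁.1 - V₀.1) * (V₂.2 - V₀.2) - (V₂.1 - V₀.1) * (V₁.2 - V₀.2) ≠ 0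

/-- All three interior angles are strictly acute (positive dot products at each vertex). -/
def IsAcute (V₀ V₁ V₂ : ℤ × ℤ) : Prop :=
  0 < dotv (V₁ - V₀) (V₂ - V₀) ∧ 0 < dotv (V₀ - V₁) (V₂ - V₁) ∧
    0 < dotv (V₀ - V₂) (V₁ - V₂)

/-- `H` is the orthocenter of the triangle `V₀V₁V₂`. -/
def IsOrthocenter (H V₀ V₁ V₂ : ℤ × ℤ) : Prop :=
  dotv (H - V₀) (V₁ - V₂) = 0 ∧ dotv (H - V₁) (V₂ - V₀) = 0 ∧
    dotv (H - V₂) (V₀ - V₁) = 0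

/-- `F` is the circumcenter of the triangle `V₀V₁V₂` (equidistant from the vertices). -/
def IsCircumcenter (F V₀ V₁ V₂ : ℤ × ℤ) : Prop :=
  dotv (F - V₀) (F - V₀) = dotv (F - V₁) (F - V₁) ∧
    dotv (F - V₀) (F - V₀) = dotv (F - V₂) (F - V₂)

/-- Lattice perimeter of a lattice triangle. -/
def latPerim (V₀ V₁ V₂ : ℤ × ℤ) : ℕ := llen V₀ V₁ + llen V₁ V₂ + llen V₀ V₂

/-- The interior angle of the triangle at vertex `V`, with the other vertices `A`, `B`. -/
noncomputable def angleAt (V A B : ℤ × ℤ) : ℝ :=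
  Real.arccos ((((A.1 - V.1) * (B.1 - V.1) + (A.2 - V.2) * (B.2 - V.2) : ℤ) : ℝ) /
    (Real.sqrt (((A.1 - V.1) ^ 2 + (A.2 - V.2) ^ 2 : ℤ)) *
      Real.sqrt (((B.1 - V.1) ^ 2 + (B.2 - V.2) ^ 2 : ℤ))))

def GoodT (ℓ : ℕ) : Prop :=
  ∃ V₀ V₁ V₂ : ℤ × ℤ, IsAcute V₀ V₁ V₂ ∧
      (3 : ℤ) ∣ (V₀.1 + V₁.1 + V₂.1) ∧ (3 : ℤ) ∣ (V₀.2 + V₁.2 + V₂.2) ∧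
      latPerim V₀ V₁ V₂ = ℓ

lemma gcd_one_of_bezout (u v : ℤ) {a b : ℤ} (h : u*a + v*b = 1) : Int.gcd a b = 1 :=
  Int.isCoprime_iff_gcd_eq_one.mp ⟨u, v, h⟩

lemma mkGood {ℓ : ℕ} (B1 B2 C1 C2 : ℤ) (g1 g2 g3 : ℕ)
    (hg1 : Int.gcd B1 B2 = g1)
    (hg2 : Int.gcd (B1 - C1) (B2 - C2) = g2)
    (hg3 : Int.gcd C1 C2 = g3)
    (hsum : g1 + g2 + g3 = ℓ)
    (hd1 : 0 < B1 * C1 + B2 * C2)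
    (hd2 : 0 < (-B1) * (C1 - B1) + (-B2) * (C2 - B2))
    (hd3 : 0 < (-C1) * (B1 - C1) + (-C2) * (B2 - C2))
    (hx : (3:ℤ) ∣ (B1 + C1)) (hy : (3:ℤ) ∣ (B2 + C2)) : GoodT ℓ := by
  refine ⟨(0,0), (B1,B2), (C1,C2), ⟨?_, ?_, ?_⟩, ?_, ?_, ?_⟩
  · simp only [dotv, Prod.mk_sub_mk, sub_zero]
    linarith [hd1]
  · simp only [dotv, Prod.mk_sub_mk, zero_sub]
    linarith [hd2]
  · simp only [dotv, Prod.mk_sub_mk, zero_sub]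
    linarith [hd3]
  · simpa using hx
  · simpa using hy
  · simp only [latPerim, llen, zero_sub]
    simp only [Int.neg_gcd, Int.gcd_neg]
    rw [hg1, hg2, hg3]
    omega

lemma gcd_natAbs_eval (a : ℤ) (n : ℕ) (h : a = (n:ℤ)) : Int.gcd a 0 = n := by
  rw [Int.gcd_zero_right]; omega

lemma famA (m : ℕ) : GoodT (3*m+4) := by
  have hM : (0:ℤ) ≤ (m:ℤ) := Int.natCast_nonneg m
  refine mkGood (3*(m:ℤ)+2) 0 1 (9*(m:ℤ)+6) (3*m+2) 1 1 ?_ ?_ ?_ (by omega) ?_ ?_ ?_ ⟨(m:ℤ)+1, by ring⟩ ⟨3*(m:ℤ)+2, by ring⟩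
  · rw [Int.gcd_zero_right]; omega
  · exact gcd_one_of_bezout (3*(m:ℤ)+1) ((m:ℤ)) (by ring)
  · exact gcd_one_of_bezout 1 0 (by ring)
  · nlinarith
  · nlinarith
  · nlinarith

lemma famB (m : ℕ) : GoodT (3*m+6) := by
  have hM : (0:ℤ) ≤ (m:ℤ) := Int.natCast_nonneg m
  refine mkGood (3*(m:ℤ)+4) 0 2 (18*(m:ℤ)+15) (3*m+4) 1 1 ?_ ?_ ?_ (by omega) ?_ ?_ ?_ ⟨(m:ℤ)+2, by ring⟩ ⟨6*(m:ℤ)+5, by ring⟩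
  · rw [Int.gcd_zero_right]; omega
  · exact gcd_one_of_bezout (12*(m:ℤ)+8) (2*(m:ℤ)+1) (by ring)
  · exact gcd_one_of_bezout (-(9*(m:ℤ)+7)) 1 (by ring)
  · nlinarith
  · nlinarith
  · nlinarith

lemma famA2 (m : ℕ) : GoodT (6*m+8) := by
  have hM : (0:ℤ) ≤ (m:ℤ) := Int.natCast_nonneg m
  refine mkGood (6*(m:ℤ)+4) 0 2 (18*(m:ℤ)+12) (6*m+4) 2 2 ?_ ?_ ?_ (by omega) ?_ ?_ ?_ ⟨2*(m:ℤ)+2, by ring⟩ ⟨6*(m:ℤ)+4, by ring⟩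
  · rw [Int.gcd_zero_right]; omega
  · rw [show (6*(m:ℤ)+4) - 2 = 2*(3*(m:ℤ)+1) by ring,
        show (0:ℤ) - (18*(m:ℤ)+12) = 2*(-(9*(m:ℤ)+6)) by ring, Int.gcd_mul_left]
    have h : Int.gcd (3*(m:ℤ)+1) (-(9*(m:ℤ)+6)) = 1 :=
      gcd_one_of_bezout (3*(m:ℤ)+1) ((m:ℤ)) (by ring)
    rw [h]; decide
  · rw [show (2:ℤ) = 2*1 by ring, show (18*(m:ℤ)+12) = 2*(9*(m:ℤ)+6) by ring,
        Int.gcd_mul_left]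
    have h : Int.gcd (1:ℤ) (9*(m:ℤ)+6) = 1 := gcd_one_of_bezout 1 0 (by ring)
    rw [h]; decide
  · nlinarith
  · nlinarith
  · nlinarith

lemma famC6 (m : ℕ) : GoodT (12*m+29) := by
  have hM : (0:ℤ) ≤ (m:ℤ) := Int.natCast_nonneg m
  refine mkGood 18 (30*(m:ℤ)+79) (18*(m:ℤ)+51) (24*(m:ℤ)+68) 1 (6*m+11) (6*m+17) ?_ ?_ ?_ (by omega) ?_ ?_ ?_ ⟨6*(m:ℤ)+23, by ring⟩ ⟨18*(m:ℤ)+49, by ring⟩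
  · exact gcd_one_of_bezout (-(10*(m:ℤ)^2+48*(m:ℤ)+57)) (6*(m:ℤ)+13) (by ring)
  · rw [show (18:ℤ) - (18*(m:ℤ)+51) = (6*(m:ℤ)+11)*(-3) by ring,
        show (30*(m:ℤ)+79) - (24*(m:ℤ)+68) = (6*(m:ℤ)+11)*1 by ring, Int.gcd_mul_left]
    have : Int.gcd (-3 : ℤ) 1 = 1 := by decide
    rw [this]; omega
  · rw [show (18*(m:ℤ)+51) = (6*(m:ℤ)+17)*3 by ring,
        show (24*(m:ℤ)+68) = (6*(m:ℤ)+17)*4 by ring, Int.gcd_mul_left]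
    have : Int.gcd (3 : ℤ) 4 = 1 := by decide
    rw [this]; omega
  · nlinarith
  · nlinarith
  · nlinarith

lemma famC12 (m : ℕ) : GoodT (12*m+47) := by
  have hM : (0:ℤ) ≤ (m:ℤ) := Int.natCast_nonneg m
  refine mkGood 36 (30*(m:ℤ)+133) (18*(m:ℤ)+87) (24*(m:ℤ)+116) 1 (6*m+17) (6*m+29) ?_ ?_ ?_ (by omega) ?_ ?_ ?_ ⟨6*(m:ℤ)+41, by ring⟩ ⟨18*(m:ℤ)+83, by ring⟩
  · exact gcd_one_of_bezout (-(5*(m:ℤ)^2+33*(m:ℤ)+48)) (6*(m:ℤ)+13) (by ring)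
  · rw [show (36:ℤ) - (18*(m:ℤ)+87) = (6*(m:ℤ)+17)*(-3) by ring,
        show (30*(m:ℤ)+133) - (24*(m:ℤ)+116) = (6*(m:ℤ)+17)*1 by ring, Int.gcd_mul_left]
    have : Int.gcd (-3 : ℤ) 1 = 1 := by decide
    rw [this]; omega
  · rw [show (18*(m:ℤ)+87) = (6*(m:ℤ)+29)*3 by ring,
        show (24*(m:ℤ)+116) = (6*(m:ℤ)+29)*4 by ring, Int.gcd_mul_left]
    have : Int.gcd (3 : ℤ) 4 = 1 := by decide
    rw [this]; omega
  · nlinarith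
  · nlinarith
  · nlinarith

lemma ex3 : GoodT 3 :=
  mkGood 1 (-2) (-1) (-1) 1 1 1 (by decide) (by decide) (by decide) (by decide)
    (by norm_num) (by norm_num) (by norm_num) ⟨0, by norm_num⟩ ⟨-1, by norm_num⟩

lemma ex17 : GoodT 17 :=
  mkGood 5 (-10) (-11) (-11) 5 1 11 (by decide) (by decide) (by decide) (by decide)
    (by norm_num) (by norm_num) (by norm_num) ⟨-2, by norm_num⟩ ⟨-7, by norm_num⟩

lemma ex23 : GoodT 23 :=
  mkGood 7 (-15) (-10) (-15) 1 17 5 (by decide) (by decide) (by decide) (by decide)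
    (by norm_num) (by norm_num) (by norm_num) ⟨-1, by norm_num⟩ ⟨-10, by norm_num⟩

lemma ex35 : GoodT 35 :=
  mkGood 10 (-15) (-19) (-15) 5 29 1 (by decide) (by decide) (by decide) (by decide)
    (by norm_num) (by norm_num) (by norm_num) ⟨-3, by norm_num⟩ ⟨-10, by norm_num⟩

lemma nat_dvd_gcd_iff (p : ℕ) (a b : ℤ) : p ∣ Int.gcd a b ↔ (p:ℤ) ∣ a ∧ (p:ℤ) ∣ b := by
  constructor
  · intro h
    have h' : (p:ℤ) ∣ (Int.gcd a b : ℤ) := Int.natCast_dvd_natCast.mpr h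
    exact ⟨h'.trans (Int.gcd_dvd_left a b), h'.trans (Int.gcd_dvd_right a b)⟩
  · rintro ⟨h1, h2⟩
    exact Int.natCast_dvd_natCast.mp (Int.dvd_coe_gcd h1 h2)

lemma forward {ℓ : ℕ} (h : GoodT ℓ) : 3 ≤ ℓ ∧ ℓ ≠ 5 ∧ ℓ ≠ 11 := by
  obtain ⟨V₀, V₁, V₂, ⟨hA0, hA1, hA2⟩, hx, hy, hperim⟩ := h
  simp only [dotv, Prod.fst_sub, Prod.snd_sub] at hA0 hA1 hA2
  obtain ⟨g1, e1⟩ : ∃ g : ℕ, Int.gcd (V₀.1 - V₁.1) (V₀.2 - V₁.2) = g := ⟨_, rfl⟩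
  obtain ⟨g2, e2⟩ : ∃ g : ℕ, Int.gcd (V₁.1 - V₂.1) (V₁.2 - V₂.2) = g := ⟨_, rfl⟩
  obtain ⟨g3, e3⟩ : ∃ g : ℕ, Int.gcd (V₀.1 - V₂.1) (V₀.2 - V₂.2) = g := ⟨_, rfl⟩
  have hsum : g1 + g2 + g3 = ℓ := by rw [← e1, ← e2, ← e3]; exact hperim
  have n1 : g1 ≠ 0 := by
    intro h0
    rw [h0, Int.gcd_eq_zero_iff] at e1
    have h1 : V₁.1 - V₀.1 = 0 := by omega
    have h2 : V₁.2 - V₀.2 = 0 := by omega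
    rw [h1, h2] at hA0
    simp at hA0
  have n2 : g2 ≠ 0 := by
    intro h0
    rw [h0, Int.gcd_eq_zero_iff] at e2
    have h1 : V₂.1 - V₁.1 = 0 := by omega
    have h2 : V₂.2 - V₁.2 = 0 := by omega
    rw [h1, h2] at hA1
    simp at hA1
  have n3 : g3 ≠ 0 := by
    intro h0
    rw [h0, Int.gcd_eq_zero_iff] at e3
    have h1 : V₀.1 - V₂.1 = 0 := by omega
    have h2 : V₀.2 - V₂.2 = 0 := by omega
    rw [h1, h2] at hA2
    simp at hA2
  have trans1 : ∀ p : ℕ, p ∣ g2 → p ∣ g3 → p ∣ g1 := by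
    intro p h2 h3
    rw [← e2, nat_dvd_gcd_iff] at h2
    rw [← e3, nat_dvd_gcd_iff] at h3
    rw [← e1, nat_dvd_gcd_iff]
    constructor
    · rw [show V₀.1 - V₁.1 = (V₀.1 - V₂.1) - (V₁.1 - V₂.1) by ring]
      exact dvd_sub h3.1 h2.1
    · rw [show V₀.2 - V₁.2 = (V₀.2 - V₂.2) - (V₁.2 - V₂.2) by ring]
      exact dvd_sub h3.2 h2.2
  have trans2 : ∀ p : ℕ, p ∣ g1 → p ∣ g3 → p ∣ g2 := by
    intro p h1 h3
    rw [← e1, nat_dvd_gcd_iff] at h1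
    rw [← e3, nat_dvd_gcd_iff] at h3
    rw [← e2, nat_dvd_gcd_iff]
    constructor
    · rw [show V₁.1 - V₂.1 = (V₀.1 - V₂.1) - (V₀.1 - V₁.1) by ring]
      exact dvd_sub h3.1 h1.1
    · rw [show V₁.2 - V₂.2 = (V₀.2 - V₂.2) - (V₀.2 - V₁.2) by ring]
      exact dvd_sub h3.2 h1.2
  have trans3 : ∀ p : ℕ, p ∣ g1 → p ∣ g2 → p ∣ g3 := by
    intro p h1 h2
    rw [← e1, nat_dvd_gcd_iff] at h1
    rw [← e2, nat_dvd_gcd_iff] at h2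
    rw [← e3, nat_dvd_gcd_iff]
    constructor
    · rw [show V₀.1 - V₂.1 = (V₀.1 - V₁.1) + (V₁.1 - V₂.1) by ring]
      exact dvd_add h1.1 h2.1
    · rw [show V₀.2 - V₂.2 = (V₀.2 - V₁.2) + (V₁.2 - V₂.2) by ring]
      exact dvd_add h1.2 h2.2
  have m12 : 3 ∣ g1 → 3 ∣ g2 := by
    intro h1
    rw [← e1, nat_dvd_gcd_iff] at h1
    rw [← e2, nat_dvd_gcd_iff]
    push_cast at h1 ⊢
    exact ⟨by omega, by omega⟩
  have m23 : 3 ∣ g2 → 3 ∣ g3 := by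
    intro h2
    rw [← e2, nat_dvd_gcd_iff] at h2
    rw [← e3, nat_dvd_gcd_iff]
    push_cast at h2 ⊢
    exact ⟨by omega, by omega⟩
  have m31 : 3 ∣ g3 → 3 ∣ g1 := by
    intro h3
    rw [← e3, nat_dvd_gcd_iff] at h3
    rw [← e1, nat_dvd_gcd_iff]
    push_cast at h3 ⊢
    exact ⟨by omega, by omega⟩
  clear e1 e2 e3 hA0 hA1 hA2 hx hy hperim
  refine ⟨by omega, ?_, ?_⟩
  · intro h5
    have hs : g1 + g2 + g3 = 5 := by omega
    have k1 : ¬ 3 ∣ g1 := fun hh => by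
      have hh2 := m12 hh
      have hh3 := m23 hh2
      omega
    have k2 : ¬ 3 ∣ g2 := fun hh => by
      have hh3 := m23 hh
      have hh1 := m31 hh3
      omega
    have k3 : ¬ 3 ∣ g3 := fun hh => by
      have hh1 := m31 hh
      have hh2 := m12 hh1
      omega
    by_cases p1 : 2 ∣ g1 <;> by_cases p2 : 2 ∣ g2 <;> by_cases p3 : 2 ∣ g3
    · omega
    · exact p3 (trans3 2 p1 p2)
    · exact p2 (trans2 2 p1 p3)
    · omega
    · exact p1 (trans1 2 p2 p3)
    · omega
    · omega
    · have hb : 1 ≤ g1 ∧ g1 ≤ 5 ∧ 1 ≤ g2 ∧ g2 ≤ 5 := by omega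
      obtain ⟨b1, b2, b3, b4⟩ := hb
      interval_cases g1 <;> interval_cases g2 <;> omega
  · intro h11
    have hs : g1 + g2 + g3 = 11 := by omega
    have k1 : ¬ 3 ∣ g1 := fun hh => by
      have hh2 := m12 hh
      have hh3 := m23 hh2
      omega
    have k2 : ¬ 3 ∣ g2 := fun hh => by
      have hh3 := m23 hh
      have hh1 := m31 hh3
      omega
    have k3 : ¬ 3 ∣ g3 := fun hh => by
      have hh1 := m31 hh
      have hh2 := m12 hh1
      omega
    by_cases p1 : 2 ∣ g1 <;> by_cases p2 : 2 ∣ g2 <;> by_cases p3 : 2 ∣ g3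
    · omega
    · exact p3 (trans3 2 p1 p2)
    · exact p2 (trans2 2 p1 p3)
    · omega
    · exact p1 (trans1 2 p2 p3)
    · omega
    · omega
    · have hcase : (g1=1∧g2=5∧g3=5) ∨ (g1=5∧g2=1∧g3=5) ∨ (g1=5∧g2=5∧g3=1) := by
        have hb : 1 ≤ g1 ∧ g1 ≤ 11 ∧ 1 ≤ g2 ∧ g2 ≤ 11 := by omega
        obtain ⟨b1, b2, b3, b4⟩ := hb
        interval_cases g1 <;> interval_cases g2 <;> omega
      rcases hcase with ⟨a,b,c⟩|⟨a,b,c⟩|⟨a,b,c⟩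
      · have := trans1 5 (by omega) (by omega); omega
      · have := trans2 5 (by omega) (by omega); omega
      · have := trans3 5 (by omega) (by omega); omega

theorem stmt18 (ℓ : ℕ) :
    (∃ V₀ V₁ V₂ : ℤ × ℤ, IsAcute V₀ V₁ V₂ ∧
      (3 : ℤ) ∣ (V₀.1 + V₁.1 + V₂.1) ∧ (3 : ℤ) ∣ (V₀.2 + V₁.2 + V₂.2) ∧
      latPerim V₀ V₁ V₂ = ℓ) ↔ (3 ≤ ℓ ∧ ℓ ≠ 5 ∧ ℓ ≠ 11) := by
  constructor
  · exact fun h => forward h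
  · rintro ⟨h3, h5, h11⟩
    have hcase : ℓ = 3 ∨ ℓ = 17 ∨ ℓ = 23 ∨ ℓ = 35 ∨ (ℓ % 3 = 1 ∧ 4 ≤ ℓ) ∨
        (ℓ % 3 = 0 ∧ 6 ≤ ℓ) ∨ (ℓ % 6 = 2 ∧ 8 ≤ ℓ) ∨ (ℓ % 12 = 5 ∧ 29 ≤ ℓ) ∨
        (ℓ % 12 = 11 ∧ 47 ≤ ℓ) := by omega
    rcases hcase with rfl|rfl|rfl|rfl|⟨h,h'⟩|⟨h,h'⟩|⟨h,h'⟩|⟨h,h'⟩|⟨h,h'⟩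
    · exact ex3
    · exact ex17
    · exact ex23
    · exact ex35
    · obtain ⟨m, rfl⟩ : ∃ m, ℓ = 3*m+4 := ⟨(ℓ-4)/3, by omega⟩
      exact famA m
    · obtain ⟨m, rfl⟩ : ∃ m, ℓ = 3*m+6 := ⟨(ℓ-6)/3, by omega⟩
      exact famB m
    · obtain ⟨m, rfl⟩ : ∃ m, ℓ = 6*m+8 := ⟨(ℓ-8)/6, by omega⟩
      exact famA2 m
    · obtain ⟨m, rfl⟩ : ∃ m, ℓ = 12*m+29 := ⟨(ℓ-29)/12, by omega⟩
      exact famC6 m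
    · obtain ⟨m, rfl⟩ : ∃ m, ℓ = 12*m+47 := ⟨(ℓ-47)/12, by omega⟩
      exact famC12 m
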